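/- arXiv:2605.23383 — 4 statements merged into one kernel-verified Lean document; each statement's English description precedes it below -/
import Mathlib

section
/- For complex numbers θ with sin θ ≠ 0, set C = csc θ, Z_l = e^{2ilθ}, W_l = (Z_l - 1)C, and K_{r,s} = W_r W_s + 4(Z_r + Z_s) for integers r, s. Then K_{r,s} = 0 if and only if cos(rθ)·cos(sθ) = cos((r-s)θ)·cos(2θ). -/
open Complex in
/-- With `C = csc θ`, `Z_l = e^{2ilθ}`, `W_l = (Z_l - 1)C`,
`K_{r,s} = W_r W_s + 4(Z_r + Z_s) = 0 ↔ cos(rθ)cos(sθ) = cos((r-s)θ)cos(2θ)`. -/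
theorem stmt6 (θ : ℂ) (hθ : Complex.sin θ ≠ 0) (r s : ℤ) :
    ((Complex.exp (2 * I * r * θ) - 1) * (Complex.sin θ)⁻¹) *
          ((Complex.exp (2 * I * s * θ) - 1) * (Complex.sin θ)⁻¹) +
        4 * (Complex.exp (2 * I * r * θ) + Complex.exp (2 * I * s * θ)) = 0 ↔
      Complex.cos (r * θ) * Complex.cos (s * θ) =
        Complex.cos ((r - s) * θ) * Complex.cos (2 * θ) := by
  set x := Complex.exp (I * r * θ) with hxdef
  set y := Complex.exp (I * s * θ) with hydef
  set e := Complex.exp (I * θ) with hedef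
  have hx : x ≠ 0 := Complex.exp_ne_zero _
  have hy : y ≠ 0 := Complex.exp_ne_zero _
  have he : e ≠ 0 := Complex.exp_ne_zero _
  have hI : (I : ℂ) ≠ 0 := Complex.I_ne_zero
  have e2r : Complex.exp (2 * I * r * θ) = x ^ 2 := by
    rw [hxdef, sq, ← Complex.exp_add]; ring_nf
  have e2s : Complex.exp (2 * I * s * θ) = y ^ 2 := by
    rw [hydef, sq, ← Complex.exp_add]; ring_nf
  have hcr : Complex.cos (r * θ) = (x + x⁻¹) / 2 := by
    rw [Complex.cos, hxdef, ← Complex.exp_neg]; ring_nf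
  have hcs : Complex.cos (s * θ) = (y + y⁻¹) / 2 := by
    rw [Complex.cos, hydef, ← Complex.exp_neg]; ring_nf
  have hcrs : Complex.cos ((r - s) * θ) = (x * y⁻¹ + x⁻¹ * y) / 2 := by
    rw [Complex.cos, hxdef, hydef, ← Complex.exp_neg, ← Complex.exp_neg,
      ← Complex.exp_add, ← Complex.exp_add]
    ring_nf
  have hc2 : Complex.cos (2 * θ) = (e ^ 2 + (e ^ 2)⁻¹) / 2 := by
    rw [Complex.cos, hedef, sq, ← Complex.exp_add,
      show (2 : ℂ) * θ * I = I * θ + I * θ by ring,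
      show -(2 * θ) * I = -(I * θ + I * θ) by ring, Complex.exp_neg]
  have hsin : Complex.sin θ = (e - e⁻¹) * (2 * I)⁻¹ := by
    rw [Complex.sin, hedef, ← Complex.exp_neg]
    field_simp
    ring_nf
    simp only [Complex.I_sq]
    ring
  have hsinsq : Complex.sin θ ^ 2 = (e - e⁻¹) ^ 2 * (-4)⁻¹ := by
    rw [hsin, mul_pow, inv_pow, mul_pow, Complex.I_sq]
    norm_num
  have key : (((Complex.exp (2 * I * r * θ) - 1) * (Complex.sin θ)⁻¹) *
          ((Complex.exp (2 * I * s * θ) - 1) * (Complex.sin θ)⁻¹) +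
        4 * (Complex.exp (2 * I * r * θ) + Complex.exp (2 * I * s * θ))) * Complex.sin θ ^ 2
      = 4 * x * y * (Complex.cos (r * θ) * Complex.cos (s * θ) -
          Complex.cos ((r - s) * θ) * Complex.cos (2 * θ)) := by
    have h1 : (((Complex.exp (2 * I * r * θ) - 1) * (Complex.sin θ)⁻¹) *
          ((Complex.exp (2 * I * s * θ) - 1) * (Complex.sin θ)⁻¹) +
        4 * (Complex.exp (2 * I * r * θ) + Complex.exp (2 * I * s * θ))) * Complex.sin θ ^ 2
        = (Complex.exp (2 * I * r * θ) - 1) * (Complex.exp (2 * I * s * θ) - 1)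
          + 4 * (Complex.exp (2 * I * r * θ) + Complex.exp (2 * I * s * θ)) *
            Complex.sin θ ^ 2 := by
      field_simp
    rw [h1, e2r, e2s, hsinsq, hcr, hcs, hcrs, hc2]
    field_simp
    have hrel : x ^ 2 * y ^ 2 * e ^ 2 * (x⁻¹ ^ 2 * y⁻¹ ^ 2 * e⁻¹ ^ 2) = 1 := by
      field_simp
    linear_combination (0 : ℂ) * hrel
  have hs2 : Complex.sin θ ^ 2 ≠ 0 := pow_ne_zero _ hθ
  constructor
  · intro h
    have h0 : 4 * x * y * (Complex.cos (r * θ) * Complex.cos (s * θ) -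
        Complex.cos ((r - s) * θ) * Complex.cos (2 * θ)) = 0 := by
      rw [← key, h, zero_mul]
    have h1 := (mul_eq_zero.1 h0).resolve_left
      (mul_ne_zero (mul_ne_zero (by norm_num) hx) hy)
    exact sub_eq_zero.1 h1
  · intro h
    have h0 : (((Complex.exp (2 * I * r * θ) - 1) * (Complex.sin θ)⁻¹) *
          ((Complex.exp (2 * I * s * θ) - 1) * (Complex.sin θ)⁻¹) +
        4 * (Complex.exp (2 * I * r * θ) + Complex.exp (2 * I * s * θ))) *
          Complex.sin θ ^ 2 = 0 := by
      rw [key, h, sub_self, mul_zero]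
    exact (mul_eq_zero.1 h0).resolve_right hs2
end

section
/- Let k be a rational number. The product 16·G_{12}·G_{21}, where G_{12} = √π · Γ((1+k)/6) / (4 Γ((2+k)/12) Γ((6+k)/12)) and G_{21} = √π · Γ((5-k)/6) / (2 Γ((6-k)/12) Γ((10-k)/12)), equals (1 + 2 sin θ)/(2 sin θ) = C/2 + 1, where θ = (1+k)π/6 and C = csc θ, provided all Gamma factors are defined and sin θ ≠ 0. -/
open Real in
/-- With `θ = (1+k)π/6`, `G12 = √π Γ((1+k)/6)/(4 Γ((2+k)/12) Γ((6+k)/12))` and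
`G21 = √π Γ((5-k)/6)/(2 Γ((6-k)/12) Γ((10-k)/12))`, one has
`16 G12 G21 = (1 + 2 sin θ)/(2 sin θ) = C/2 + 1` where `C = csc θ`. -/
theorem stmt9 (k : ℚ) (hsin : Real.sin ((1 + (k : ℝ)) * π / 6) ≠ 0)
    (h1 : Real.Gamma ((2 + (k : ℝ)) / 12) ≠ 0) (h2 : Real.Gamma ((6 + (k : ℝ)) / 12) ≠ 0)
    (h3 : Real.Gamma ((6 - (k : ℝ)) / 12) ≠ 0) (h4 : Real.Gamma ((10 - (k : ℝ)) / 12) ≠ 0) :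
    16 * (Real.sqrt π * Real.Gamma ((1 + (k : ℝ)) / 6) /
        (4 * Real.Gamma ((2 + (k : ℝ)) / 12) * Real.Gamma ((6 + (k : ℝ)) / 12))) *
      (Real.sqrt π * Real.Gamma ((5 - (k : ℝ)) / 6) /
        (2 * Real.Gamma ((6 - (k : ℝ)) / 12) * Real.Gamma ((10 - (k : ℝ)) / 12))) =
      (1 + 2 * Real.sin ((1 + (k : ℝ)) * π / 6)) / (2 * Real.sin ((1 + (k : ℝ)) * π / 6)) ∧
    (1 + 2 * Real.sin ((1 + (k : ℝ)) * π / 6)) / (2 * Real.sin ((1 + (k : ℝ)) * π / 6)) =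
      (Real.sin ((1 + (k : ℝ)) * π / 6))⁻¹ / 2 + 1 := by
  set a : ℝ := (k : ℝ)
  have hπ : (0:ℝ) < π := Real.pi_pos
  -- reflection formulas
  have rA : Real.Gamma ((2 + a) / 12) * Real.Gamma ((10 - a) / 12)
      = π / Real.sin (π * ((2 + a) / 12)) := by
    have := Real.Gamma_mul_Gamma_one_sub ((2 + a) / 12)
    have h : (1 : ℝ) - (2 + a) / 12 = (10 - a) / 12 := by ring
    rwa [h] at this
  have rB : Real.Gamma ((6 + a) / 12) * Real.Gamma ((6 - a) / 12)
      = π / Real.sin (π * ((6 + a) / 12)) := by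
    have := Real.Gamma_mul_Gamma_one_sub ((6 + a) / 12)
    have h : (1 : ℝ) - (6 + a) / 12 = (6 - a) / 12 := by ring
    rwa [h] at this
  have rC : Real.Gamma ((1 + a) / 6) * Real.Gamma ((5 - a) / 6)
      = π / Real.sin (π * ((1 + a) / 6)) := by
    have := Real.Gamma_mul_Gamma_one_sub ((1 + a) / 6)
    have h : (1 : ℝ) - (1 + a) / 6 = (5 - a) / 6 := by ring
    rwa [h] at this
  have hsinC : Real.sin (π * ((1 + a) / 6)) = Real.sin ((1 + a) * π / 6) := by ring_nf
  have hsA : Real.sin (π * ((2 + a) / 12)) ≠ 0 := by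
    intro h0
    have : Real.Gamma ((2 + a) / 12) * Real.Gamma ((10 - a) / 12) = 0 := by
      rw [rA, h0, div_zero]
    exact (mul_ne_zero h1 h4) this
  have hsB : Real.sin (π * ((6 + a) / 12)) ≠ 0 := by
    intro h0
    have : Real.Gamma ((6 + a) / 12) * Real.Gamma ((6 - a) / 12) = 0 := by
      rw [rB, h0, div_zero]
    exact (mul_ne_zero h2 h3) this
  have hsqrt : Real.sqrt π * Real.sqrt π = π := Real.mul_self_sqrt hπ.le
  have p2s : ∀ x y : ℝ, Real.sin x * Real.sin y
      = (Real.cos (x - y) - Real.cos (x + y)) / 2 := by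
    intro x y
    rw [Real.cos_sub, Real.cos_add]; ring
  -- trig identity : 2 sinA sinB = 1/2 + sin θ
  have key : 2 * Real.sin (π * (2 + a) / 12) * Real.sin (π * (6 + a) / 12)
      = 1 / 2 + Real.sin ((1 + a) * π / 6) := by
    have h := p2s (π * (2 + a) / 12) (π * (6 + a) / 12)
    rw [show π * (2 + a) / 12 - π * (6 + a) / 12 = -(π / 3) by ring,
        show π * (2 + a) / 12 + π * (6 + a) / 12 = (1 + a) * π / 6 + π / 2 by ring,
        Real.cos_neg, Real.cos_pi_div_three, Real.cos_add_pi_div_two] at h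
    linarith
  constructor
  · have expand : 16 * (Real.sqrt π * Real.Gamma ((1 + a) / 6) /
        (4 * Real.Gamma ((2 + a) / 12) * Real.Gamma ((6 + a) / 12))) *
      (Real.sqrt π * Real.Gamma ((5 - a) / 6) /
        (2 * Real.Gamma ((6 - a) / 12) * Real.Gamma ((10 - a) / 12)))
      = 2 * (Real.sqrt π * Real.sqrt π) *
          (Real.Gamma ((1 + a) / 6) * Real.Gamma ((5 - a) / 6)) /
          ((Real.Gamma ((2 + a) / 12) * Real.Gamma ((10 - a) / 12)) *
           (Real.Gamma ((6 + a) / 12) * Real.Gamma ((6 - a) / 12))) := by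
      field_simp
      ring
    rw [expand, hsqrt, rA, rB, rC, hsinC]
    have e12 : Real.sin (π * ((2 + a) / 12)) = Real.sin (π * (2 + a) / 12) := by ring_nf
    have e6 : Real.sin (π * ((6 + a) / 12)) = Real.sin (π * (6 + a) / 12) := by ring_nf
    rw [e12] at hsA; rw [e6] at hsB; rw [e12, e6]
    have eC : Real.sin ((1 + a) * π / 6) = Real.sin (π * (1 + a) / 6) := by ring_nf
    rw [eC] at hsin key ⊢
    field_simp
    linear_combination 2 * key
  · field_simp
end

section
/- Let Q ≥ 8 be a natural number with Q ≡ 0 (mod 4), written as Q = 2^k · m with m odd and k ≥ 2. Then the number of pairs (x, y) in (Z/QZ)^2 with x·y = 2 is 2^k · φ(m), and every such pair has exactly one of x, y odd. -/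
/-- For `Q = 2^k m ≥ 8` with `4 ∣ Q`, `k ≥ 2` and `m` odd, the number of pairs
`(x, y)` in `(ℤ/Q)^2` with `x y = 2` is `2^k φ(m)`, and in every such pair exactly
one of `x, y` is odd. -/
theorem stmt10 (Q k m : ℕ) (h8 : 8 ≤ Q) (h4 : Q % 4 = 0) (hk : 2 ≤ k) (hm : Odd m)
    (hQ : Q = 2 ^ k * m) :
    Nat.card {p : ZMod Q × ZMod Q // p.1 * p.2 = 2} = 2 ^ k * Nat.totient m ∧
      ∀ x y : ZMod Q, x * y = 2 → Xor' (Odd x.val) (Odd y.val) := by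
  haveI : NeZero Q := ⟨by omega⟩
  have h4' : (4:ℕ) ∣ Q := Nat.dvd_of_mod_eq_zero h4
  have h2' : (2:ℕ) ∣ Q := dvd_trans (by norm_num) h4'
  have h2v : (2 : ZMod Q).val = 2 := by
    have : ((2:ℕ) : ZMod Q).val = 2 % Q := ZMod.val_natCast Q 2
    simpa [Nat.mod_eq_of_lt (show 2 < Q by omega)] using this
  -- product of vals mod Q
  have hval : ∀ x y : ZMod Q, x * y = 2 → x.val * y.val % Q = 2 := by
    intro x y h
    have := congrArg ZMod.val h
    rw [ZMod.val_mul] at this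
    rwa [h2v] at this
  -- key parity fact on naturals
  have key : ∀ a b : ℕ, a * b % 4 = 2 → Xor' (Odd a) (Odd b) := by
    intro a b h
    rcases Nat.even_or_odd a with ha | ha
    · rcases Nat.even_or_odd b with hb | hb
      · exfalso
        obtain ⟨a', rfl⟩ := ha
        obtain ⟨b', rfl⟩ := hb
        have : (a' + a') * (b' + b') = 4 * (a' * b') := by ring
        rw [this, Nat.mul_mod_right] at h
        omega
      · right
        exact ⟨hb, by simpa [Nat.even_iff] using ha⟩
    · rcases Nat.even_or_odd b with hb | hb
      · left
        exact ⟨ha, by simpa [Nat.even_iff] using hb⟩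
      · exfalso
        have hodd := Nat.odd_iff.mp (ha.mul hb)
        omega
  have hxor : ∀ x y : ZMod Q, x * y = 2 → Xor' (Odd x.val) (Odd y.val) := by
    intro x y h
    apply key
    have h1 : x.val * y.val ≡ 2 [MOD Q] := by
      unfold Nat.ModEq
      rw [hval x y h, Nat.mod_eq_of_lt (show 2 < Q by omega)]
    have h2 := h1.of_dvd h4'
    simpa [Nat.ModEq] using h2
  refine ⟨?_, hxor⟩
  -- odd + solution implies unit
  have hunit : ∀ x y : ZMod Q, x * y = 2 → Odd x.val → IsUnit x := by
    intro x y h hodd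
    have hcop : Nat.Coprime x.val Q := by
      rw [Nat.coprime_iff_gcd_eq_one]
      by_contra hg
      obtain ⟨p, hp, hpd⟩ := Nat.exists_prime_and_dvd hg
      have hpx : p ∣ x.val := hpd.trans (Nat.gcd_dvd_left _ _)
      have hpQ : p ∣ Q := hpd.trans (Nat.gcd_dvd_right _ _)
      have heq : x.val * y.val = Q * (x.val * y.val / Q) + 2 := by
        conv_lhs => rw [← Nat.div_add_mod (x.val * y.val) Q]
        rw [hval x y h]
      have hp2 : p ∣ 2 := by
        have h1 : p ∣ x.val * y.val := hpx.mul_right _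
        have h2 : p ∣ Q * (x.val * y.val / Q) := hpQ.mul_right _
        have : p ∣ Q * (x.val * y.val / Q) + 2 := heq ▸ h1
        exact (Nat.dvd_add_right h2).mp this
      have hp2' : p = 2 := (Nat.prime_dvd_prime_iff_eq hp Nat.prime_two).mp hp2
      subst hp2'
      have := Nat.odd_iff.mp hodd
      obtain ⟨c, hc⟩ := hpx
      omega
    have : IsUnit ((x.val : ℕ) : ZMod Q) := (ZMod.isUnit_iff_coprime _ _).mpr hcop
    rwa [ZMod.natCast_val, ZMod.cast_id] at this
  -- units have odd val
  have hodd_unit : ∀ u : (ZMod Q)ˣ, Odd ((u : ZMod Q).val) := by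
    intro u
    have hc := ZMod.val_coe_unit_coprime u
    rw [Nat.odd_iff]
    by_contra hcon
    have h2v' : (2:ℕ) ∣ (u : ZMod Q).val := by omega
    have hd : (2:ℕ) ∣ Nat.gcd (u : ZMod Q).val Q := Nat.dvd_gcd h2v' h2'
    rw [Nat.Coprime] at hc
    omega
  -- elements of the form 2 * w have even val
  have heven2 : ∀ w : ZMod Q, ¬ Odd ((2 * w : ZMod Q)).val := by
    intro w hcon
    have h1 : (2 * w : ZMod Q).val = 2 * w.val % Q := by
      rw [ZMod.val_mul, h2v]
    have h2 : (2:ℕ) ∣ (2 * w : ZMod Q).val := by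
      rw [h1]
      exact (Nat.dvd_mod_iff h2').mpr ⟨w.val, rfl⟩
    have := Nat.odd_iff.mp hcon
    omega
  -- the bijection
  set S := {p : ZMod Q × ZMod Q // p.1 * p.2 = 2} with hS
  have sol1 : ∀ u : (ZMod Q)ˣ, (u : ZMod Q) * (2 * ((u⁻¹ : (ZMod Q)ˣ) : ZMod Q)) = 2 := by
    intro u
    have := u.mul_inv
    calc (u : ZMod Q) * (2 * ((u⁻¹ : (ZMod Q)ˣ) : ZMod Q))
        = 2 * ((u : ZMod Q) * ((u⁻¹ : (ZMod Q)ˣ) : ZMod Q)) := by ring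
      _ = 2 := by rw [u.mul_inv, mul_one]
  let g : (ZMod Q)ˣ ⊕ (ZMod Q)ˣ → S := fun s =>
    match s with
    | Sum.inl u => ⟨((u : ZMod Q), 2 * ((u⁻¹ : (ZMod Q)ˣ) : ZMod Q)), sol1 u⟩
    | Sum.inr u => ⟨(2 * ((u⁻¹ : (ZMod Q)ˣ) : ZMod Q), (u : ZMod Q)), by
        rw [mul_comm]; exact sol1 u⟩
  have hginj : Function.Injective g := by
    intro s t h
    have h1 := congrArg (fun s : S => s.1.1) h
    have h2 := congrArg (fun s : S => s.1.2) h
    rcases s with u | u <;> rcases t with v | v <;> simp only [g] at h1 h2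
    · exact congrArg Sum.inl (Units.ext h1)
    · exact absurd (h1 ▸ hodd_unit u) (heven2 _)
    · exact absurd (h2 ▸ hodd_unit u) (heven2 _)
    · exact congrArg Sum.inr (Units.ext h2)
  have hgsurj : Function.Surjective g := by
    rintro ⟨⟨x, y⟩, hxy⟩
    have hx2 : x * y = 2 := hxy
    rcases hxor x y hx2 with ⟨hox, -⟩ | ⟨hoy, -⟩
    · have hu := hunit x y hx2 hox
      refine ⟨Sum.inl hu.unit, ?_⟩
      simp only [g]
      apply Subtype.ext
      apply Prod.ext
      · exact hu.unit_spec
      · show 2 * ((hu.unit⁻¹ : (ZMod Q)ˣ) : ZMod Q) = y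
        have h1 : (hu.unit : ZMod Q) * y = 2 := by rw [hu.unit_spec]; exact hx2
        calc 2 * ((hu.unit⁻¹ : (ZMod Q)ˣ) : ZMod Q)
            = ((hu.unit : ZMod Q) * y) * ((hu.unit⁻¹ : (ZMod Q)ˣ) : ZMod Q) := by rw [h1]
          _ = y * ((hu.unit : ZMod Q) * ((hu.unit⁻¹ : (ZMod Q)ˣ) : ZMod Q)) := by ring
          _ = y := by rw [Units.mul_inv, mul_one]
    · have hu := hunit y x (by rw [mul_comm]; exact hx2) hoy
      refine ⟨Sum.inr hu.unit, ?_⟩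
      simp only [g]
      apply Subtype.ext
      apply Prod.ext
      · show 2 * ((hu.unit⁻¹ : (ZMod Q)ˣ) : ZMod Q) = x
        have h1 : (hu.unit : ZMod Q) * x = 2 := by
          rw [hu.unit_spec, mul_comm]; exact hx2
        calc 2 * ((hu.unit⁻¹ : (ZMod Q)ˣ) : ZMod Q)
            = ((hu.unit : ZMod Q) * x) * ((hu.unit⁻¹ : (ZMod Q)ˣ) : ZMod Q) := by rw [h1]
          _ = x * ((hu.unit : ZMod Q) * ((hu.unit⁻¹ : (ZMod Q)ˣ) : ZMod Q)) := by ring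
          _ = x := by rw [Units.mul_inv, mul_one]
      · exact hu.unit_spec
  have hcard : Nat.card ((ZMod Q)ˣ ⊕ (ZMod Q)ˣ) = Nat.card S :=
    Nat.card_eq_of_bijective g ⟨hginj, hgsurj⟩
  rw [← hcard, Nat.card_sum, Nat.card_eq_fintype_card, ZMod.card_units_eq_totient]
  -- arithmetic
  have hcop2m : Nat.Coprime (2 ^ k) m := by
    apply Nat.Coprime.pow_left
    rw [Nat.coprime_comm]
    exact Nat.coprime_two_right.mpr hm
  rw [hQ, Nat.totient_mul hcop2m, Nat.totient_prime_pow Nat.prime_two (show 0 < k by omega)]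
  have hpow : 2 ^ k = 2 ^ (k - 1) * 2 := by
    rw [← pow_succ]
    congr 1
    omega
  rw [hpow]
  ring
end

section
/- Let N be a positive integer and Q a divisor of N. Let r, s be integers with r·s ≡ 2 (mod Q) and r odd. Then there exist integers x, y with x ≡ r (mod Q), y ≡ s (mod Q), x·y ≡ 2 (mod N), and x·y - 2 > N. -/
/-- If `Q ∣ N`, `r s ≡ 2 (mod Q)` and `r` is odd, then there are integers `x ≡ r`,
`y ≡ s (mod Q)` with `x y ≡ 2 (mod N)` and `x y - 2 > N`. -/
theorem stmt14 (N Q : ℕ) (hN : 0 < N) (hdvd : Q ∣ N) (r s : ℤ)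
    (h2 : r * s ≡ 2 [ZMOD (Q : ℤ)]) (hr : Odd r) :
    ∃ x y : ℤ, x ≡ r [ZMOD (Q : ℤ)] ∧ y ≡ s [ZMOD (Q : ℤ)] ∧
      x * y ≡ 2 [ZMOD (N : ℤ)] ∧ (N : ℤ) < x * y - 2 := by
  have hg : Int.gcd r Q = 1 := by
    have hQd : (Q : ℤ) ∣ r * s - 2 := Int.ModEq.dvd h2.symm
    have h1 : (Int.gcd r Q : ℤ) ∣ r * s := Dvd.dvd.mul_right (Int.gcd_dvd_left r (Q : ℤ)) s
    have h3 : (Int.gcd r Q : ℤ) ∣ r * s - 2 := (Int.gcd_dvd_right r (Q : ℤ)).trans hQd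
    have hd2 : (Int.gcd r Q : ℤ) ∣ 2 := by
      have := dvd_sub h1 h3; simpa using this
    have hg2 : Int.gcd r Q ∣ 2 := by exact_mod_cast hd2
    rcases (Nat.dvd_prime Nat.prime_two).mp hg2 with h | h
    · exact h
    · exfalso
      have : (2 : ℤ) ∣ r := by
        have : ((Int.gcd r Q : ℤ)) ∣ r := Int.gcd_dvd_left r (Q : ℤ)
        rw [h] at this; exact_mod_cast this
      have := Int.odd_iff.mp hr
      omega
  rcases eq_or_lt_of_le (show 1 ≤ N from hN) with hN1 | hN1
  · -- N = 1, hence Q = 1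
    have hNe : N = 1 := hN1.symm
    subst hNe
    have hQ1 : Q = 1 := Nat.dvd_one.mp hdvd
    subst hQ1
    exact ⟨4, 1, Int.modEq_one, Int.modEq_one, Int.modEq_one, by norm_num⟩
  · -- N ≥ 2
    haveI : NeZero N := ⟨hN.ne'⟩
    haveI : NeZero Q := ⟨(Nat.pos_of_dvd_of_pos hdvd hN).ne'⟩
    haveI : Fact (1 < N) := ⟨hN1⟩
    have hcop : Nat.Coprime r.natAbs Q := by rwa [Int.gcd] at hg
    have hunit : IsUnit ((r : ℤ) : ZMod Q) := by
      have h1 : IsUnit ((r.natAbs : ℕ) : ZMod Q) :=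
        (ZMod.isUnit_iff_coprime _ _).mpr hcop
      rcases Int.natAbs_eq r with h | h
      · rw [h, Int.cast_natCast]; exact h1
      · rw [h, Int.cast_neg, Int.cast_natCast]; exact h1.neg
    obtain ⟨u, hu⟩ := hunit
    obtain ⟨v, hv⟩ := ZMod.unitsMap_surjective hdvd u
    set X : ZMod N := (v : ZMod N) with hX
    set Y : ZMod N := 2 * ((v⁻¹ : (ZMod N)ˣ) : ZMod N) with hY
    have hQN : ((N : ℕ) : ZMod Q) = 0 := by
      rcases hdvd with ⟨c, rfl⟩; push_cast; simp
    refine ⟨(X.val : ℤ), (Y.val : ℤ) + (N + 3) * N, ?_, ?_, ?_, ?_⟩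
    · -- x ≡ r mod Q
      rw [← ZMod.intCast_eq_intCast_iff]
      push_cast
      rw [ZMod.natCast_val]
      have h1 : (ZMod.cast X : ZMod Q) = ZMod.castHom hdvd (ZMod Q) X := rfl
      have h2' : ZMod.castHom hdvd (ZMod Q) X
          = ((ZMod.unitsMap hdvd v : (ZMod Q)ˣ) : ZMod Q) := rfl
      rw [h1, h2', hv, hu]
    · -- y ≡ s mod Q
      rw [← ZMod.intCast_eq_intCast_iff]
      push_cast
      rw [ZMod.natCast_val, hQN]
      have h1 : (ZMod.cast Y : ZMod Q) = ZMod.castHom hdvd (ZMod Q) Y := rfl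
      have h2' : ZMod.castHom hdvd (ZMod Q) Y
          = 2 * ZMod.castHom hdvd (ZMod Q) ((v⁻¹ : (ZMod N)ˣ) : ZMod N) := by
        rw [hY, map_mul, map_ofNat]
      have h3' : ZMod.castHom hdvd (ZMod Q) ((v⁻¹ : (ZMod N)ˣ) : ZMod N)
          = ((ZMod.unitsMap hdvd v⁻¹ : (ZMod Q)ˣ) : ZMod Q) := rfl
      rw [h1, h2', h3', map_inv, hv]
      have hus : (u : ZMod Q) * (s : ZMod Q) = 2 := by
        have := (ZMod.intCast_eq_intCast_iff _ _ _).mpr h2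
        push_cast at this
        rw [hu]; exact_mod_cast this
      have hkey := congrArg (fun z => ((u⁻¹ : (ZMod Q)ˣ) : ZMod Q) * z) hus
      simp only [← mul_assoc] at hkey
      rw [Units.inv_mul] at hkey
      simp at hkey
      rw [hkey]
      ring
    · -- x * y ≡ 2 mod N
      rw [← ZMod.intCast_eq_intCast_iff]
      push_cast
      rw [ZMod.natCast_val, ZMod.natCast_val, ZMod.cast_id, ZMod.cast_id,
        ZMod.natCast_self]
      have hXY : X * Y = 2 := by
        rw [hX, hY, mul_comm (2 : ZMod N), ← mul_assoc]
        simp [Units.mul_inv]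
      rw [mul_add, hXY]
      ring
    · -- size bound
      have hx1 : 1 ≤ (X.val : ℤ) := by
        have hne : X ≠ 0 := v.ne_zero
        have : X.val ≠ 0 := by rwa [Ne, ZMod.val_eq_zero]
        omega
      have hy0 : (0 : ℤ) ≤ (Y.val : ℤ) := by positivity
      have hN2 : (2 : ℤ) ≤ N := by exact_mod_cast hN1
      nlinarith [mul_le_mul_of_nonneg_right hx1
        (by nlinarith : (0:ℤ) ≤ (Y.val : ℤ) + (N + 3) * N)]
end
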